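/- Every discrete loss ℓ : R → ℝ_{≥0}^Y with R finite is embedded by a polyhedral loss. Concretely, let n = |Y|, let risk_ℓ(p) = min_{r∈R} ⟨p, ℓ(r)⟩ be the Bayes risk, let C : ℝ^n → ℝ be the convex conjugate of −risk_ℓ (extended to be −∞ off Δ_Y), and define L : ℝ^n → ℝ^Y by L(u) = C(u)·𝟙 − u. Then (a) L(u)_y ≥ 0 for all u ∈ ℝ^n and y ∈ Y, (b) L is polyhedral, and (c) for all p ∈ Δ_Y, inf_{u∈ℝ^n} ⟨p, L(u)⟩ = risk_ℓ(p). -/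

import Mathlib

section Aux

variable {Y R : Type*} [Fintype Y] [Fintype R] [Nonempty R]

/-- The Bayes risk of the loss `ℓ`. -/
noncomputable def riskF (ℓ : R → Y → ℝ) (p : Y → ℝ) : ℝ :=
  Finset.univ.inf' Finset.univ_nonempty (fun r => ∑ y, p y * ℓ r y)

lemma continuous_riskF (ℓ : R → Y → ℝ) : Continuous (riskF ℓ) := by
  apply Continuous.finset_inf'_apply Finset.univ_nonempty
  intro r _
  exact continuous_finset_sum _ fun y _ => (continuous_apply y).mul continuous_const

lemma riskF_le (ℓ : R → Y → ℝ) (p : Y → ℝ) (r : R) :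
    riskF ℓ p ≤ ∑ y, p y * ℓ r y :=
  Finset.inf'_le _ (Finset.mem_univ r)

lemma riskF_nonneg (ℓ : R → Y → ℝ) (hℓ : ∀ r y, 0 ≤ ℓ r y) (p : Y → ℝ)
    (hp : ∀ y, 0 ≤ p y) : 0 ≤ riskF ℓ p :=
  Finset.le_inf' _ _ fun r _ => Finset.sum_nonneg fun y _ => mul_nonneg (hp y) (hℓ r y)

/-- The solution set of the linear system given by support `A` and active set `B`. -/
def Sol (ℓ : R → Y → ℝ) (A : Finset Y) (B : Finset R) : Set (Y → ℝ) :=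
  {p | (∀ y ∉ A, p y = 0) ∧ (∑ y, p y) = 1 ∧
    ∀ r ∈ B, ∀ r' ∈ B, (∑ y, p y * ℓ r y) = ∑ y, p y * ℓ r' y}

open Classical in
noncomputable def dfltPt (Y : Type*) [Fintype Y] [Nonempty Y] : Y → ℝ :=
  fun y => if y = Classical.arbitrary Y then 1 else 0

lemma dfltPt_mem [Nonempty Y] : dfltPt Y ∈ stdSimplex ℝ Y := by
  classical
  constructor
  · intro y; unfold dfltPt; split <;> norm_num
  · unfold dfltPt; simp

open Classical in
noncomputable def cand [Nonempty Y] (ℓ : R → Y → ℝ) (A : Finset Y) (B : Finset R) : Y → ℝ :=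
  if h : ∃ p, Sol ℓ A B = {p} ∧ p ∈ stdSimplex ℝ Y then h.choose else dfltPt Y

lemma cand_mem [Nonempty Y] (ℓ : R → Y → ℝ) (A : Finset Y) (B : Finset R) :
    cand ℓ A B ∈ stdSimplex ℝ Y := by
  unfold cand
  split_ifs with h
  · exact h.choose_spec.2
  · exact dfltPt_mem

/-- Key lemma: there is a finite set `J ⊆ Δ` containing, for every `u`, a global
maximizer over the simplex of `p ↦ ⟨u,p⟩ + risk(p)`. -/
lemma key [Nonempty Y] (ℓ : R → Y → ℝ) :
    ∃ J : Finset (Y → ℝ), J.Nonempty ∧ (∀ p ∈ J, p ∈ stdSimplex ℝ Y) ∧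
      ∀ u : Y → ℝ, ∃ p₀ ∈ J, ∀ q ∈ stdSimplex ℝ Y,
        (∑ y, u y * q y) + riskF ℓ q ≤ (∑ y, u y * p₀ y) + riskF ℓ p₀ := by
  classical
  refine ⟨Finset.image (fun AB : Finset Y × Finset R => cand ℓ AB.1 AB.2) Finset.univ,
    ⟨_, Finset.mem_image_of_mem _ (Finset.mem_univ ((∅ : Finset Y), (∅ : Finset R)))⟩,
    fun p hp => ?_, fun u => ?_⟩
  · obtain ⟨AB, -, rfl⟩ := Finset.mem_image.1 hp
    exact cand_mem ℓ AB.1 AB.2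
  set f : (Y → ℝ) → ℝ := fun p => (∑ y, u y * p y) + riskF ℓ p with hfdef
  have hfc : Continuous f := by
    apply Continuous.add
    · exact continuous_finset_sum _ fun y _ => continuous_const.mul (continuous_apply y)
    · exact continuous_riskF ℓ
  have hΔc : IsCompact (stdSimplex ℝ Y) := isCompact_stdSimplex ℝ Y
  have hΔne : (stdSimplex ℝ Y).Nonempty := ⟨dfltPt Y, dfltPt_mem⟩
  obtain ⟨p₁, hp₁Δ, hp₁⟩ := hΔc.exists_isMaxOn hΔne hfc.continuousOn
  set M : Set (Y → ℝ) := stdSimplex ℝ Y ∩ {p | f p₁ ≤ f p} with hMdef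
  have hMc : IsCompact M := hΔc.inter_right (isClosed_le continuous_const hfc)
  have hMne : M.Nonempty := ⟨p₁, hp₁Δ, show f p₁ ≤ f p₁ from le_rfl⟩
  set g : (Y → ℝ) → ℝ := fun p => ∑ y, (p y) ^ 2 with hgdef
  have hgc : Continuous g := continuous_finset_sum _ fun y _ => (continuous_apply y).pow 2
  obtain ⟨ps, hpsM, hps⟩ := hMc.exists_isMaxOn hMne hgc.continuousOn
  have hpsΔ : ps ∈ stdSimplex ℝ Y := hpsM.1
  have hfps : f p₁ ≤ f ps := hpsM.2
  have hmax : ∀ q ∈ stdSimplex ℝ Y, f q ≤ f ps := fun q hq => le_trans (hp₁ hq) hfps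
  set A : Finset Y := Finset.univ.filter (fun y => ps y ≠ 0) with hAdef
  set B : Finset R := Finset.univ.filter (fun r => (∑ y, ps y * ℓ r y) = riskF ℓ ps) with hBdef
  obtain ⟨r₁, -, hr₁⟩ := Finset.exists_mem_eq_inf' (Finset.univ_nonempty)
    (fun r => ∑ y, ps y * ℓ r y)
  have hr₁' : riskF ℓ ps = ∑ y, ps y * ℓ r₁ y := hr₁
  have hr₁B : r₁ ∈ B := by
    rw [hBdef, Finset.mem_filter]
    exact ⟨Finset.mem_univ _, hr₁'.symm⟩
  have hBval : ∀ r ∈ B, (∑ y, ps y * ℓ r y) = riskF ℓ ps := by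
    intro r hr; exact (Finset.mem_filter.1 hr).2
  have hAzero : ∀ y ∉ A, ps y = 0 := by
    intro y hy
    by_contra h
    exact hy (by rw [hAdef]; exact Finset.mem_filter.2 ⟨Finset.mem_univ _, h⟩)
  have hpsSol : ps ∈ Sol ℓ A B :=
    ⟨hAzero, hpsΔ.2, fun r hr r' hr' => by rw [hBval r hr, hBval r' hr']⟩
  have huniq : ∀ q, q ∈ Sol ℓ A B → q = ps := by
    intro q hq
    by_contra hne
    set d : Y → ℝ := fun y => q y - ps y with hddef
    have hdne : ∃ y, d y ≠ 0 := by
      by_contra h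
      push_neg at h
      refine hne (funext fun y => ?_)
      have := h y
      rw [hddef] at this
      simp only [sub_eq_zero] at this
      exact this
    have hdA : ∀ y ∉ A, d y = 0 := by
      intro y hy
      rw [hddef]
      simp only [hq.1 y hy, hAzero y hy, sub_zero]
    have hdsum : (∑ y, d y) = 0 := by
      rw [hddef]
      rw [Finset.sum_sub_distrib, hq.2.1, hpsΔ.2, sub_self]
    set δ : ℝ := ∑ y, d y * ℓ r₁ y with hδdef
    have hδB : ∀ r ∈ B, (∑ y, d y * ℓ r y) = δ := by
      intro r hr
      have h1 := hq.2.2 r hr r₁ hr₁B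
      have h2 : (∑ y, ps y * ℓ r y) = ∑ y, ps y * ℓ r₁ y := by
        rw [hBval r hr, hBval r₁ hr₁B]
      rw [hδdef, hddef]
      simp only [sub_mul, Finset.sum_sub_distrib]
      rw [h1, h2]
    have hAne : A.Nonempty := by
      by_contra h
      rw [Finset.not_nonempty_iff_eq_empty] at h
      have hz : (∑ y, ps y) = 0 :=
        Finset.sum_eq_zero fun y _ => hAzero y (by rw [h]; exact Finset.notMem_empty y)
      rw [hpsΔ.2] at hz
      norm_num at hz
    set εA : ℝ := A.inf' hAne (fun y => ps y / (|d y| + 1)) with hεAdef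
    have hεApos : 0 < εA := by
      rw [hεAdef, Finset.lt_inf'_iff]
      intro y hy
      have h0 : ps y ≠ 0 := (Finset.mem_filter.1 hy).2
      have h1 : 0 < ps y := lt_of_le_of_ne (hpsΔ.1 y) (Ne.symm h0)
      positivity
    set Bc : Finset R := Finset.univ \ B with hBcdef
    have hgap : ∀ r ∈ Bc, 0 < (∑ y, ps y * ℓ r y) - riskF ℓ ps := by
      intro r hr
      have hle := riskF_le ℓ ps r
      have hne' : (∑ y, ps y * ℓ r y) ≠ riskF ℓ ps := by
        intro h
        exact (Finset.mem_sdiff.1 hr).2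
          (by rw [hBdef]; exact Finset.mem_filter.2 ⟨Finset.mem_univ _, h⟩)
      rcases lt_or_eq_of_le hle with h | h
      · linarith
      · exact absurd h.symm hne'
    set εB : ℝ := if hc : Bc.Nonempty then
        Bc.inf' hc (fun r =>
          ((∑ y, ps y * ℓ r y) - riskF ℓ ps) / (|∑ y, d y * ℓ r y| + |δ| + 1))
      else 1 with hεBdef
    have hεBpos : 0 < εB := by
      rw [hεBdef]
      split_ifs with hc
      · rw [Finset.lt_inf'_iff]
        intro r hr
        have := hgap r hr
        positivity
      · norm_num
    set ε : ℝ := min εA εB with hεdef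
    have hεpos : 0 < ε := lt_min hεApos hεBpos
    have hεA' : ∀ y ∈ A, ε * (|d y| + 1) ≤ ps y := by
      intro y hy
      have h1 : ε ≤ ps y / (|d y| + 1) :=
        le_trans (min_le_left _ _) (Finset.inf'_le _ hy)
      have h2 : (0 : ℝ) < |d y| + 1 := by positivity
      rw [← le_div_iff₀ h2]
      exact h1
    have hεB' : ∀ r ∈ Bc,
        ε * (|∑ y, d y * ℓ r y| + |δ|) ≤ (∑ y, ps y * ℓ r y) - riskF ℓ ps := by
      intro r hr
      have hc : Bc.Nonempty := ⟨r, hr⟩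
      have h1 : ε ≤ ((∑ y, ps y * ℓ r y) - riskF ℓ ps) / (|∑ y, d y * ℓ r y| + |δ| + 1) := by
        refine le_trans (min_le_right _ _) ?_
        rw [hεBdef, dif_pos hc]
        exact Finset.inf'_le _ hr
      have h2 : (0 : ℝ) < |∑ y, d y * ℓ r y| + |δ| + 1 := by positivity
      have h3 : ε * (|∑ y, d y * ℓ r y| + |δ| + 1)
          ≤ (∑ y, ps y * ℓ r y) - riskF ℓ ps := by
        rw [← le_div_iff₀ h2]; exact h1
      nlinarith [h3, hεpos]
    have hsd : ∀ s x : ℝ, |s| = 1 → s * ε * x ≤ ε * |x| ∧ -(ε * |x|) ≤ s * ε * x := by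
      intro s x hs
      have h1 : |s * ε * x| = ε * |x| := by
        rw [abs_mul, abs_mul, hs, abs_of_pos hεpos]; ring
      constructor
      · calc s * ε * x ≤ |s * ε * x| := le_abs_self _
          _ = ε * |x| := h1
      · have := neg_abs_le (s * ε * x)
        rw [h1] at this
        exact this
    have main : ∀ s : ℝ, |s| = 1 →
        (fun y => ps y + s * ε * d y) ∈ stdSimplex ℝ Y ∧
        riskF ℓ (fun y => ps y + s * ε * d y) = riskF ℓ ps + s * ε * δ := by
      intro s hs
      have hsum' : ∀ r : R, (∑ y, (ps y + s * ε * d y) * ℓ r y)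
          = (∑ y, ps y * ℓ r y) + s * ε * (∑ y, d y * ℓ r y) := by
        intro r
        rw [Finset.mul_sum, ← Finset.sum_add_distrib]
        exact Finset.sum_congr rfl fun y _ => by ring
      constructor
      · constructor
        · intro y
          show 0 ≤ ps y + s * ε * d y
          by_cases hy : y ∈ A
          · have h1 := hεA' y hy
            have h2 := (hsd s (d y) hs).2
            have h3 : 0 ≤ |d y| := abs_nonneg _
            nlinarith
          · rw [hdA y hy, hAzero y hy]
            simp
        · show (∑ y, (ps y + s * ε * d y)) = 1
          rw [Finset.sum_add_distrib, hpsΔ.2, ← Finset.mul_sum, hdsum]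
          ring
      · apply le_antisymm
        · have h1 : riskF ℓ (fun y => ps y + s * ε * d y)
              ≤ ∑ y, (ps y + s * ε * d y) * ℓ r₁ y := riskF_le _ _ r₁
          rw [hsum' r₁, ← hr₁', ← hδdef] at h1
          exact h1
        · apply Finset.le_inf'
          intro r _
          rw [hsum' r]
          by_cases hr : r ∈ B
          · rw [hBval r hr, hδB r hr]
          · have hr' : r ∈ Bc := by
              rw [hBcdef]
              exact Finset.mem_sdiff.2 ⟨Finset.mem_univ r, hr⟩
            have h3 := hεB' r hr'
            have h4 := (hsd s (∑ y, d y * ℓ r y) hs).2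
            have h5 := (hsd s δ hs).1
            nlinarith [abs_nonneg (∑ y, d y * ℓ r y), abs_nonneg δ]
    have hfval : ∀ s : ℝ, |s| = 1 →
        f (fun y => ps y + s * ε * d y) = f ps + s * ε * ((∑ y, u y * d y) + δ) := by
      intro s hs
      show (∑ y, u y * (ps y + s * ε * d y)) + riskF ℓ (fun y => ps y + s * ε * d y)
          = ((∑ y, u y * ps y) + riskF ℓ ps) + s * ε * ((∑ y, u y * d y) + δ)
      rw [(main s hs).2]
      have h1 : (∑ y, u y * (ps y + s * ε * d y))
          = (∑ y, u y * ps y) + s * ε * (∑ y, u y * d y) := by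
        rw [Finset.mul_sum, ← Finset.sum_add_distrib]
        exact Finset.sum_congr rfl fun y _ => by ring
      rw [h1]; ring
    have hs1 : |(1 : ℝ)| = 1 := abs_one
    have hs2 : |(-1 : ℝ)| = 1 := by norm_num
    have hle1 := hmax _ (main 1 hs1).1
    have hle2 := hmax _ (main (-1) hs2).1
    rw [hfval 1 hs1] at hle1
    rw [hfval (-1) hs2] at hle2
    have hK : (∑ y, u y * d y) + δ = 0 := by nlinarith
    have hMem : ∀ s : ℝ, |s| = 1 → (fun y => ps y + s * ε * d y) ∈ M := by
      intro s hs
      refine ⟨(main s hs).1, ?_⟩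
      show f p₁ ≤ f (fun y => ps y + s * ε * d y)
      rw [hfval s hs, hK]
      simpa using hfps
    have hgval : ∀ s : ℝ, g (fun y => ps y + s * ε * d y)
        = g ps + 2 * s * ε * (∑ y, ps y * d y) + s ^ 2 * ε ^ 2 * (∑ y, (d y) ^ 2) := by
      intro s
      show (∑ y, (ps y + s * ε * d y) ^ 2)
          = (∑ y, (ps y) ^ 2) + 2 * s * ε * (∑ y, ps y * d y)
            + s ^ 2 * ε ^ 2 * (∑ y, (d y) ^ 2)
      rw [Finset.mul_sum, Finset.mul_sum, ← Finset.sum_add_distrib, ← Finset.sum_add_distrib]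
      exact Finset.sum_congr rfl fun y _ => by ring
    have hg1 : g (fun y => ps y + 1 * ε * d y) ≤ g ps := hps (hMem 1 hs1)
    have hg2 : g (fun y => ps y + (-1) * ε * d y) ≤ g ps := hps (hMem (-1) hs2)
    rw [hgval 1] at hg1
    rw [hgval (-1)] at hg2
    have hdpos : 0 < ∑ y, (d y) ^ 2 := by
      obtain ⟨y0, hy0⟩ := hdne
      exact Finset.sum_pos' (fun y _ => sq_nonneg _)
        ⟨y0, Finset.mem_univ y0, by positivity⟩
    nlinarith [mul_pos (mul_pos hεpos hεpos) hdpos, hg1, hg2]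
  have hcand : cand ℓ A B = ps := by
    have hSol : Sol ℓ A B = {ps} := Set.eq_singleton_iff_unique_mem.2 ⟨hpsSol, huniq⟩
    have hex : ∃ p, Sol ℓ A B = {p} ∧ p ∈ stdSimplex ℝ Y := ⟨ps, hSol, hpsΔ⟩
    unfold cand
    rw [dif_pos hex]
    have h1 := hex.choose_spec.1
    have h2 := hpsSol
    rw [h1] at h2
    exact (Set.mem_singleton_iff.1 h2).symm
  refine ⟨cand ℓ A B, Finset.mem_image_of_mem _ (Finset.mem_univ (A, B)), ?_⟩
  rw [hcand]
  exact hmax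

end Aux

/-- Every discrete loss is embedded by a polyhedral loss: the conjugate construction
`L(u) = C(u)·𝟙 − u` with `C = (−risk_ℓ)^*` is (a) nonnegative, (b) polyhedral, and
(c) has the same Bayes risk as `ℓ`. -/
theorem stmt4 {Y R : Type*} [Fintype Y] [Fintype R] [Nonempty R]
    (ℓ : R → Y → ℝ) (hℓ : ∀ r y, 0 ≤ ℓ r y)
    (risk : (Y → ℝ) → ℝ)
    (hrisk : ∀ p, risk p = Finset.univ.inf' Finset.univ_nonempty
        (fun r => ∑ y, p y * ℓ r y))
    (C : (Y → ℝ) → ℝ)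
    (hC : ∀ u, C u = sSup {t : ℝ | ∃ p : Y → ℝ, (∀ y, 0 ≤ p y) ∧ (∑ y, p y) = 1 ∧
        t = (∑ y, u y * p y) + risk p})
    (L : (Y → ℝ) → Y → ℝ)
    (hLdef : ∀ u y, L u y = C u - u y) :
    (∀ u y, 0 ≤ L u y) ∧
    (∀ y : Y, ∃ (m : ℕ) (a : Fin (m + 1) → (Y → ℝ)) (c : Fin (m + 1) → ℝ),
      ∀ u, L u y = Finset.univ.sup' Finset.univ_nonempty
        (fun j => (∑ i, a j i * u i) + c j)) ∧
    (∀ p : Y → ℝ, (∀ y, 0 ≤ p y) → (∑ y, p y) = 1 →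
      sInf {t : ℝ | ∃ u : Y → ℝ, t = ∑ y, p y * L u y} = risk p) := by
  classical
  rcases isEmpty_or_nonempty Y with hY | hY
  · refine ⟨fun u y => absurd (IsEmpty.false y) (fun h => h),
      fun y => absurd (IsEmpty.false y) (fun h => h), fun p hp hsum => ?_⟩
    rw [Finset.univ_eq_empty, Finset.sum_empty] at hsum
    norm_num at hsum
  have hrF : ∀ p, risk p = riskF ℓ p := hrisk
  obtain ⟨J, hJne, hJΔ, hJmax⟩ := key ℓ
  have hCeq : ∀ u, ∃ p₀ ∈ J, (∀ q ∈ stdSimplex ℝ Y,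
      (∑ y, u y * q y) + riskF ℓ q ≤ (∑ y, u y * p₀ y) + riskF ℓ p₀) ∧
      C u = (∑ y, u y * p₀ y) + riskF ℓ p₀ := by
    intro u
    obtain ⟨p₀, hp₀J, hm⟩ := hJmax u
    refine ⟨p₀, hp₀J, hm, ?_⟩
    rw [hC u]
    apply IsGreatest.csSup_eq
    constructor
    · exact ⟨p₀, (hJΔ _ hp₀J).1, (hJΔ _ hp₀J).2, by rw [hrF]⟩
    · rintro t ⟨p, hp1, hp2, rfl⟩
      rw [hrF]
      exact hm p ⟨hp1, hp2⟩
  refine ⟨?_, ?_, ?_⟩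
  · -- (a) nonnegativity
    intro u y
    rw [hLdef]
    obtain ⟨p₀, hp₀J, hm, hCu⟩ := hCeq u
    have hδΔ : (fun i => if i = y then (1 : ℝ) else 0) ∈ stdSimplex ℝ Y := by
      constructor
      · intro i
        by_cases h : i = y <;> simp [h]
      · simp
    have h1 := hm _ hδΔ
    have h2 : (∑ i, u i * (if i = y then (1 : ℝ) else 0)) = u y := by
      simp [mul_ite]
    rw [h2] at h1
    have h3 : 0 ≤ riskF ℓ (fun i => if i = y then (1 : ℝ) else 0) :=
      riskF_nonneg ℓ hℓ _ fun i => by by_cases h : i = y <;> simp [h]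
    rw [hCu]
    linarith
  · -- (b) polyhedrality
    intro y
    set l := J.toList with hldef
    have hlne : l ≠ [] := by
      rw [hldef, Ne, Finset.toList_eq_nil]
      exact Finset.nonempty_iff_ne_empty.1 hJne
    have hlpos : 0 < l.length := List.length_pos_iff.2 hlne
    have hlen : (l.length - 1) + 1 = l.length := Nat.succ_pred_eq_of_pos hlpos
    refine ⟨l.length - 1,
      fun j i => l.get (Fin.cast hlen j) i - (if i = y then 1 else 0),
      fun j => riskF ℓ (l.get (Fin.cast hlen j)), fun u => ?_⟩
    have hmemJ : ∀ j : Fin ((l.length - 1) + 1), l.get (Fin.cast hlen j) ∈ J := by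
      intro j
      rw [← Finset.mem_toList, ← hldef]
      exact List.get_mem l (Fin.cast hlen j)
    have hterm : ∀ q : Y → ℝ,
        (∑ i, (q i - (if i = y then (1 : ℝ) else 0)) * u i)
          = ((∑ i, u i * q i) - u y) := by
      intro q
      have h1 : ∀ i, (q i - (if i = y then (1 : ℝ) else 0)) * u i
          = u i * q i - (if i = y then u i else 0) := by
        intro i
        by_cases h : i = y <;> simp [h] <;> ring
      calc (∑ i, (q i - (if i = y then (1 : ℝ) else 0)) * u i)
          = ∑ i, (u i * q i - (if i = y then u i else 0)) :=
            Finset.sum_congr rfl fun i _ => h1 i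
        _ = (∑ i, u i * q i) - ∑ i, (if i = y then u i else 0) := by
            rw [Finset.sum_sub_distrib]
        _ = (∑ i, u i * q i) - u y := by rw [Finset.sum_ite_eq' Finset.univ y u]; simp
    obtain ⟨p₀, hp₀J, hm, hCu⟩ := hCeq u
    have hCJ : C u = J.sup' hJne (fun q => (∑ i, u i * q i) + riskF ℓ q) := by
      apply le_antisymm
      · rw [hCu]
        exact Finset.le_sup' (fun q => (∑ i, u i * q i) + riskF ℓ q) hp₀J
      · apply Finset.sup'_le
        intro q hq
        rw [hCu]
        exact hm q (hJΔ q hq)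
    rw [hLdef, hCJ]
    apply le_antisymm
    · rw [sub_le_iff_le_add]
      apply Finset.sup'_le
      intro q hq
      obtain ⟨i, hi⟩ := List.mem_iff_get.1 ((Finset.mem_toList).2 hq)
      have hjidx : l.get (Fin.cast hlen (Fin.cast hlen.symm i)) = q := by
        rw [← hi]
        rfl
      have h3 := Finset.le_sup' (fun j => (∑ i, (l.get (Fin.cast hlen j) i
          - (if i = y then (1:ℝ) else 0)) * u i) + riskF ℓ (l.get (Fin.cast hlen j)))
        (Finset.mem_univ (Fin.cast hlen.symm i))
      rw [hterm, hjidx] at h3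
      linarith
    · apply Finset.sup'_le
      intro j _
      have h2 : (∑ i, (l.get (Fin.cast hlen j) i - (if i = y then (1:ℝ) else 0)) * u i)
          + riskF ℓ (l.get (Fin.cast hlen j))
          = ((∑ i, u i * l.get (Fin.cast hlen j) i) + riskF ℓ (l.get (Fin.cast hlen j))) - u y := by
        rw [hterm]; ring
      rw [h2]
      have := Finset.le_sup' (fun q => (∑ i, u i * q i) + riskF ℓ q) (hmemJ j)
      linarith
  · -- (c) same Bayes risk
    intro p hp hsum
    rw [hrF]
    obtain ⟨r₁, -, hr₁⟩ := Finset.exists_mem_eq_inf' (Finset.univ_nonempty)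
      (fun r => ∑ y, p y * ℓ r y)
    have hr₁' : riskF ℓ p = ∑ y, p y * ℓ r₁ y := hr₁
    set u₀ : Y → ℝ := fun y => -(ℓ r₁ y) with hu₀def
    have hneg : ∀ q : Y → ℝ, (∑ y, u₀ y * q y) = -∑ y, q y * ℓ r₁ y := by
      intro q
      rw [← Finset.sum_neg_distrib]
      exact Finset.sum_congr rfl fun y _ => by rw [hu₀def]; ring
    have hCu₀ : C u₀ = 0 := by
      obtain ⟨p₀, hp₀J, hm, hCu⟩ := hCeq u₀
      rw [hCu]
      have hub : (∑ y, u₀ y * p₀ y) + riskF ℓ p₀ ≤ 0 := by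
        have h1 : riskF ℓ p₀ ≤ ∑ y, p₀ y * ℓ r₁ y := riskF_le ℓ p₀ r₁
        rw [hneg p₀]
        linarith
      have hlb := hm p ⟨hp, hsum⟩
      have h3 : (∑ y, u₀ y * p y) + riskF ℓ p = 0 := by
        rw [hneg p, hr₁']
        ring
      linarith
    apply IsLeast.csInf_eq
    constructor
    · refine ⟨u₀, ?_⟩
      have hLval : ∀ y, L u₀ y = ℓ r₁ y := by
        intro y
        rw [hLdef, hCu₀, hu₀def]
        ring
      rw [hr₁']
      exact Finset.sum_congr rfl fun y _ => by rw [hLval y]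
    · rintro t ⟨u, rfl⟩
      obtain ⟨p₀, hp₀J, hm, hCu⟩ := hCeq u
      have h1 := hm p ⟨hp, hsum⟩
      have h2 : (∑ y, p y * L u y) = C u - ∑ y, p y * u y := by
        have : ∀ y, p y * L u y = p y * C u - p y * u y := by
          intro y; rw [hLdef]; ring
        calc (∑ y, p y * L u y) = ∑ y, (p y * C u - p y * u y) :=
              Finset.sum_congr rfl fun y _ => this y
          _ = (∑ y, p y) * C u - ∑ y, p y * u y := by
              rw [Finset.sum_sub_distrib, ← Finset.sum_mul]
          _ = C u - ∑ y, p y * u y := by rw [hsum]; ring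
      have h3 : (∑ y, u y * p y) = ∑ y, p y * u y :=
        Finset.sum_congr rfl fun y _ => mul_comm _ _
      rw [h2, hCu]
      linarith
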